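/- (Gyrocentre Liouville theorem, division-free form.) Let m, q be nonzero reals, let b̂₀, A₀, w₀ : ℝ³ → ℝ³ be twice continuously differentiable, let A₁ : ℝ³ × ℝ × ℝ → ℝ³, (r, μ, t) ↦ A₁(r, μ, t), be twice continuously differentiable, and let H : ℝ³ × ℝ × ℝ × ℝ → ℝ, (r, u∥, μ, t) ↦ H(r, u∥, μ, t), be twice continuously differentiable. Define A*(r, u∥, μ, t) := A₀(r) + (m u∥/q) b̂₀(r) − (m μ/q²) w₀(r) + A₁(r, μ, t), B* := ∇_r × A*, and B∥* := b̂₀ · B*. Then at every point of ℝ³ × ℝ × ℝ × ℝ: ∂_t B∥* + ∇_r · [ (1/m)(∂H/∂u∥) B* + (1/q) b̂₀ × (∇_r H + q ∂_t A₁) ] + ∂/∂u∥ [ −(1/m) B* · (∇_r H + q ∂_t A₁) ] = 0. In other words, the phase-space Jacobian B∥*/m satisfies the continuity equation ∂_t J + ∇·(J Ṙ) + ∂_{u∥}(J U̇∥) = 0 for the gyrocentre equations of motion Ṙ = (1/(m B∥*))(∂H/∂u∥)B* + (1/(q B∥*)) b̂₀ × (∇H + q ∂_t A₁) and U̇∥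 = −(1/(m B∥*)) B* · (∇H + q ∂_t A₁), wherever B∥* ≠ 0. -/

import Mathlib

open Matrix

/-- The partial derivative `∂f/∂rᵢ`. -/
noncomputable def pd (i : Fin 3) (f : (Fin 3 → ℝ) → ℝ) (r : Fin 3 → ℝ) : ℝ :=
  fderiv ℝ f r (Pi.single i 1)

/-- The gradient `∇f` of a scalar field on ℝ³. -/
noncomputable def grad (f : (Fin 3 → ℝ) → ℝ) (r : Fin 3 → ℝ) : Fin 3 → ℝ :=
  fun i => pd i f r

/-- The divergence `∇·F` of a vector field on ℝ³. -/
noncomputable def divg (F : (Fin 3 → ℝ) → Fin 3 → ℝ) (r : Fin 3 → ℝ) : ℝ :=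
  ∑ i, pd i (fun x => F x i) r

/-- The curl `∇ × F` of a vector field on ℝ³. -/
noncomputable def curl (F : (Fin 3 → ℝ) → Fin 3 → ℝ) (r : Fin 3 → ℝ) : Fin 3 → ℝ :=
  ![pd 1 (fun x => F x 2) r - pd 2 (fun x => F x 1) r,
    pd 2 (fun x => F x 0) r - pd 0 (fun x => F x 2) r,
    pd 0 (fun x => F x 1) r - pd 1 (fun x => F x 0) r]

section helpers
variable {E F : Type*} [NormedAddCommGroup E] [NormedSpace ℝ E]
  [NormedAddCommGroup F] [NormedSpace ℝ F]

private lemma diff_fderiv_apply {f : E → F} (hf : ContDiff ℝ 2 f) (v : E) :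
    Differentiable ℝ (fun x => fderiv ℝ f x v) :=
  ((hf.fderiv_right (m := 1) le_rfl).clm_apply contDiff_const).differentiable one_ne_zero

private lemma fderiv_fderiv_symm {f : E → ℝ} (hf : ContDiff ℝ 2 f) (p v w : E) :
    fderiv ℝ (fun x => fderiv ℝ f x v) p w = fderiv ℝ (fun x => fderiv ℝ f x w) p v := by
  have hd : DifferentiableAt ℝ (fderiv ℝ f) p :=
    ((hf.fderiv_right (m := 1) le_rfl).differentiable one_ne_zero) p
  have h1 : fderiv ℝ (fun x => fderiv ℝ f x v) p = (fderiv ℝ (fderiv ℝ f) p).flip v := by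
    have := fderiv_clm_apply (𝕜 := ℝ) (c := fderiv ℝ f) (u := fun _ => v) hd
      (differentiableAt_const v)
    simpa using this
  have h2 : fderiv ℝ (fun x => fderiv ℝ f x w) p = (fderiv ℝ (fderiv ℝ f) p).flip w := by
    have := fderiv_clm_apply (𝕜 := ℝ) (c := fderiv ℝ f) (u := fun _ => w) hd
      (differentiableAt_const w)
    simpa using this
  have hsym := (hf.contDiffAt (x := p)).isSymmSndFDerivAt (by simp)
  rw [h1, h2]
  exact hsym.eq w v

end helpers

section pdlemmas
variable {f g h k : (Fin 3 → ℝ) → ℝ} {x : Fin 3 → ℝ} {j : Fin 3}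

private lemma pd_add (hf : DifferentiableAt ℝ f x) (hg : DifferentiableAt ℝ g x) :
    pd j (fun y => f y + g y) x = pd j f x + pd j g x := by
  simp [pd, fderiv_fun_add hf hg]

private lemma pd_sub (hf : DifferentiableAt ℝ f x) (hg : DifferentiableAt ℝ g x) :
    pd j (fun y => f y - g y) x = pd j f x - pd j g x := by
  simp [pd, fderiv_fun_sub hf hg]

private lemma pd_const_mul (c : ℝ) (hf : DifferentiableAt ℝ f x) :
    pd j (fun y => c * f y) x = c * pd j f x := by
  simp [pd, fderiv_const_mul hf c]

private lemma pd_mul (hf : DifferentiableAt ℝ f x) (hg : DifferentiableAt ℝ g x) :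
    pd j (fun y => f y * g y) x = pd j f x * g x + f x * pd j g x := by
  simp [pd, fderiv_fun_mul hf hg]; ring

private lemma pd_add_const_mul (c : ℝ) (hf : DifferentiableAt ℝ f x)
    (hg : DifferentiableAt ℝ g x) :
    pd j (fun y => f y + c * g y) x = pd j f x + c * pd j g x := by
  rw [pd_add hf ((differentiableAt_const c).fun_mul hg), pd_const_mul c hg]

private lemma pd_combo (c c' : ℝ)
    (hf : DifferentiableAt ℝ f x) (hg : DifferentiableAt ℝ g x)
    (hh : DifferentiableAt ℝ h x) (hk : DifferentiableAt ℝ k x) :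
    pd j (fun y => f y + c * g y - c' * h y + k y) x
      = pd j f x + c * pd j g x - c' * pd j h x + pd j k x := by
  rw [pd_add (((hf.fun_add ((differentiableAt_const c).fun_mul hg)).fun_sub
      ((differentiableAt_const c').fun_mul hh))) hk,
    pd_sub (hf.fun_add ((differentiableAt_const c).fun_mul hg)) ((differentiableAt_const c').fun_mul hh),
    pd_add hf ((differentiableAt_const c).fun_mul hg), pd_const_mul c hg, pd_const_mul c' hh]

private lemma diff_pd (hf : ContDiff ℝ 2 f) (j : Fin 3) :
    Differentiable ℝ (pd j f) :=
  diff_fderiv_apply hf _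

private lemma pd_pd_symm (hf : ContDiff ℝ 2 f) (r : Fin 3 → ℝ) (i j : Fin 3) :
    pd i (fun x => pd j f x) r = pd j (fun x => pd i f x) r :=
  fderiv_fderiv_symm hf r _ _
end pdlemmas

section veccalc
variable {F G : (Fin 3 → ℝ) → Fin 3 → ℝ} {b : (Fin 3 → ℝ) → Fin 3 → ℝ}
  {f : (Fin 3 → ℝ) → ℝ} {r : Fin 3 → ℝ}

private lemma divg_add (hF : ∀ j, DifferentiableAt ℝ (fun x => F x j) r)
    (hG : ∀ j, DifferentiableAt ℝ (fun x => G x j) r) :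
    divg (fun x => F x + G x) r = divg F r + divg G r := by
  simp only [divg, Pi.add_apply, ← Finset.sum_add_distrib]
  exact Finset.sum_congr rfl fun i _ => pd_add (hF i) (hG i)

private lemma divg_curl_zero (hF : ∀ j, ContDiff ℝ 2 (fun x => F x j)) :
    divg (curl F) r = 0 := by
  have hd : ∀ (k j : Fin 3), Differentiable ℝ (fun x => pd j (fun y => F y k) x) :=
    fun k j => diff_pd (hF k) j
  simp only [divg, Fin.sum_univ_three, curl, Matrix.cons_val_zero, Matrix.cons_val_one,
    Matrix.head_cons, Matrix.cons_val_two, Matrix.tail_cons]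
  rw [pd_sub ((hd 2 1) r) ((hd 1 2) r), pd_sub ((hd 0 2) r) ((hd 2 0) r),
    pd_sub ((hd 1 0) r) ((hd 0 1) r),
    pd_pd_symm (hF 2) r 0 1, pd_pd_symm (hF 1) r 0 2, pd_pd_symm (hF 0) r 1 2]
  ring

private lemma divg_smul (hf : DifferentiableAt ℝ f r)
    (hF : ∀ j, DifferentiableAt ℝ (fun x => F x j) r) :
    divg (fun x => f x • F x) r = grad f r ⬝ᵥ F r + f r * divg F r := by
  simp only [divg, Pi.smul_apply, smul_eq_mul, dotProduct, grad, Finset.mul_sum,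
    ← Finset.sum_add_distrib]
  exact Finset.sum_congr rfl fun i _ => pd_mul hf (hF i)

private lemma curl_grad_zero (hf : ContDiff ℝ 2 f) (k : Fin 3) :
    curl (grad f) r k = 0 := by
  have h01 := pd_pd_symm hf r 0 1
  have h02 := pd_pd_symm hf r 0 2
  have h12 := pd_pd_symm hf r 1 2
  fin_cases k <;>
    simp only [curl, grad, Fin.reduceFinMk, Matrix.cons_val_zero, Matrix.cons_val_one,
      Matrix.head_cons, Matrix.cons_val_two, Matrix.tail_cons] <;>
    [rw [h12]; rw [← h02]; rw [h01]] <;> ring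

private lemma curl_add_smul (c : ℝ)
    (hF : ∀ j, DifferentiableAt ℝ (fun x => F x j) r)
    (hG : ∀ j, DifferentiableAt ℝ (fun x => G x j) r) (k : Fin 3) :
    curl (fun x => F x + c • G x) r k = curl F r k + c * curl G r k := by
  fin_cases k <;>
    simp only [curl, Pi.add_apply, Pi.smul_apply, smul_eq_mul, Fin.reduceFinMk,
      Matrix.cons_val_zero, Matrix.cons_val_one, Matrix.head_cons, Matrix.cons_val_two,
      Matrix.tail_cons] <;>
  · rw [pd_add_const_mul c (hF _) (hG _), pd_add_const_mul c (hF _) (hG _)]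
    ring

private lemma divg_smul_cross (c : ℝ)
    (hb : ∀ j, DifferentiableAt ℝ (fun x => b x j) r)
    (hG : ∀ j, DifferentiableAt ℝ (fun x => G x j) r) :
    divg (fun x => c • crossProduct (b x) (G x)) r
      = c * (G r ⬝ᵥ curl b r - b r ⬝ᵥ curl G r) := by
  simp only [divg, cross_apply, Pi.smul_apply, smul_eq_mul, Fin.sum_univ_three,
    Matrix.cons_val_zero, Matrix.cons_val_one, Matrix.head_cons, Matrix.cons_val_two,
    Matrix.tail_cons]
  rw [pd_const_mul c (((hb 1).fun_mul (hG 2)).fun_sub ((hb 2).fun_mul (hG 1))),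
    pd_const_mul c (((hb 2).fun_mul (hG 0)).fun_sub ((hb 0).fun_mul (hG 2))),
    pd_const_mul c (((hb 0).fun_mul (hG 1)).fun_sub ((hb 1).fun_mul (hG 0))),
    pd_sub ((hb 1).fun_mul (hG 2)) ((hb 2).fun_mul (hG 1)),
    pd_sub ((hb 2).fun_mul (hG 0)) ((hb 0).fun_mul (hG 2)),
    pd_sub ((hb 0).fun_mul (hG 1)) ((hb 1).fun_mul (hG 0)),
    pd_mul (hb 1) (hG 2), pd_mul (hb 2) (hG 1), pd_mul (hb 2) (hG 0),
    pd_mul (hb 0) (hG 2), pd_mul (hb 0) (hG 1), pd_mul (hb 1) (hG 0)]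
  simp only [dotProduct, curl, Fin.sum_univ_three, Matrix.cons_val_zero, Matrix.cons_val_one,
    Matrix.head_cons, Matrix.cons_val_two, Matrix.tail_cons]
  ring
end veccalc

section slices

private lemma fderiv_comp_apply' {E F : Type*} [NormedAddCommGroup E] [NormedSpace ℝ E]
    [NormedAddCommGroup F] [NormedSpace ℝ F]
    {f : F → ℝ} {ι : E → F} {L : E →L[ℝ] F} {x : E}
    (hf : DifferentiableAt ℝ f (ι x)) (hι : HasFDerivAt ι L x) (v : E) :
    fderiv ℝ (fun y => f (ι y)) x v = fderiv ℝ f (ι x) (L v) := by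
  have := (hf.hasFDerivAt.comp x hι).fderiv
  rw [show (fun y => f (ι y)) = f ∘ ι from rfl, this]
  rfl

private lemma pd_slice3 {f : (Fin 3 → ℝ) × ℝ × ℝ → ℝ} (hf : Differentiable ℝ f)
    (μ t : ℝ) (x : Fin 3 → ℝ) (j : Fin 3) :
    pd j (fun y => f (y, μ, t)) x = fderiv ℝ f (x, μ, t) (Pi.single j 1, 0, 0) := by
  have h : HasFDerivAt (fun y : Fin 3 → ℝ => ((y, μ, t) : (Fin 3 → ℝ) × ℝ × ℝ))
      ((ContinuousLinearMap.id ℝ (Fin 3 → ℝ)).prod 0) x :=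
    (hasFDerivAt_id x).prodMk (hasFDerivAt_const (μ, t) x)
  have h2 := fderiv_comp_apply' (ι := fun y => (y, μ, t)) (hf (x, μ, t)) h (Pi.single j 1)
  simpa [pd, Prod.mk_zero_zero] using h2

private lemma pd_slice4 {f : (Fin 3 → ℝ) × ℝ × ℝ × ℝ → ℝ} (hf : Differentiable ℝ f)
    (u μ t : ℝ) (x : Fin 3 → ℝ) (j : Fin 3) :
    pd j (fun y => f (y, u, μ, t)) x = fderiv ℝ f (x, u, μ, t) (Pi.single j 1, 0, 0, 0) := by
  have h : HasFDerivAt (fun y : Fin 3 → ℝ => ((y, u, μ, t) : (Fin 3 → ℝ) × ℝ × ℝ × ℝ))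
      ((ContinuousLinearMap.id ℝ (Fin 3 → ℝ)).prod 0) x :=
    (hasFDerivAt_id x).prodMk (hasFDerivAt_const (u, μ, t) x)
  have h2 := fderiv_comp_apply' (ι := fun y => (y, u, μ, t)) (hf (x, u, μ, t)) h (Pi.single j 1)
  simpa [pd, Prod.mk_zero_zero] using h2

private lemma hasDerivAt_slice_t {f : (Fin 3 → ℝ) × ℝ × ℝ → ℝ} (hf : Differentiable ℝ f)
    (x : Fin 3 → ℝ) (μ t : ℝ) :
    HasDerivAt (fun t' => f (x, μ, t')) (fderiv ℝ f (x, μ, t) (0, 0, 1)) t := by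
  have h : HasDerivAt (fun t' : ℝ => ((x, μ, t') : (Fin 3 → ℝ) × ℝ × ℝ))
      ((0 : Fin 3 → ℝ), (0 : ℝ), (1 : ℝ)) t :=
    (hasDerivAt_const t x).prodMk ((hasDerivAt_const t μ).prodMk (hasDerivAt_id' t))
  exact (hf _).hasFDerivAt.comp_hasDerivAt t h

private lemma hasDerivAt_slice_u {f : (Fin 3 → ℝ) × ℝ × ℝ × ℝ → ℝ} (hf : Differentiable ℝ f)
    (r : Fin 3 → ℝ) (u μ t : ℝ) :
    HasDerivAt (fun u' => f (r, u', μ, t)) (fderiv ℝ f (r, u, μ, t) (0, 1, 0, 0)) u := by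
  have h : HasDerivAt (fun u' : ℝ => ((r, u', μ, t) : (Fin 3 → ℝ) × ℝ × ℝ × ℝ))
      ((0 : Fin 3 → ℝ), (1 : ℝ), (0 : ℝ), (0 : ℝ)) u :=
    (hasDerivAt_const u r).prodMk ((hasDerivAt_id' u).prodMk (hasDerivAt_const u (μ, t)))
  exact (hf _).hasFDerivAt.comp_hasDerivAt u h

private lemma deriv_slice_t {f : (Fin 3 → ℝ) × ℝ × ℝ → ℝ} (hf : Differentiable ℝ f)
    (x : Fin 3 → ℝ) (μ t : ℝ) :
    deriv (fun t' => f (x, μ, t')) t = fderiv ℝ f (x, μ, t) (0, 0, 1) :=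
  (hasDerivAt_slice_t hf x μ t).deriv

private lemma deriv_slice_u {f : (Fin 3 → ℝ) × ℝ × ℝ × ℝ → ℝ} (hf : Differentiable ℝ f)
    (r : Fin 3 → ℝ) (u μ t : ℝ) :
    deriv (fun u' => f (r, u', μ, t)) u = fderiv ℝ f (r, u, μ, t) (0, 1, 0, 0) :=
  (hasDerivAt_slice_u hf r u μ t).deriv

private lemma deriv_pi_apply {f : ℝ → Fin 3 → ℝ} {t : ℝ} (hf : DifferentiableAt ℝ f t)
    (k : Fin 3) :
    deriv f t k = deriv (fun s => f s k) t := by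
  have h2 : HasDerivAt (fun s => f s k) (deriv f t k) t :=
    (ContinuousLinearMap.proj (R := ℝ) (φ := fun _ : Fin 3 => ℝ) k).hasFDerivAt.comp_hasDerivAt
      t hf.hasDerivAt
  exact h2.deriv.symm

private lemma diff_slice3 {f : (Fin 3 → ℝ) × ℝ × ℝ → ℝ} (hf : Differentiable ℝ f) (μ t : ℝ) :
    Differentiable ℝ (fun y : Fin 3 → ℝ => f (y, μ, t)) :=
  hf.comp (differentiable_id.prodMk (differentiable_const (μ, t)))

private lemma diff_slice4 {f : (Fin 3 → ℝ) × ℝ × ℝ × ℝ → ℝ} (hf : Differentiable ℝ f)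
    (u μ t : ℝ) :
    Differentiable ℝ (fun y : Fin 3 → ℝ => f (y, u, μ, t)) :=
  hf.comp (differentiable_id.prodMk (differentiable_const (u, μ, t)))

private lemma contDiff_slice3 {f : (Fin 3 → ℝ) × ℝ × ℝ → ℝ} (hf : ContDiff ℝ 2 f) (μ t : ℝ) :
    ContDiff ℝ 2 (fun y : Fin 3 → ℝ => f (y, μ, t)) :=
  hf.comp (contDiff_id.prodMk contDiff_const)

private lemma contDiff_slice4 {f : (Fin 3 → ℝ) × ℝ × ℝ × ℝ → ℝ} (hf : ContDiff ℝ 2 f)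
    (u μ t : ℝ) :
    ContDiff ℝ 2 (fun y : Fin 3 → ℝ => f (y, u, μ, t)) :=
  hf.comp (contDiff_id.prodMk contDiff_const)

end slices

/-- gyrocentre Liouville theorem, division-free form: the phase-space
Jacobian `B∥*` satisfies the continuity equation for the gyrocentre equations of
motion. -/
theorem gyrocentre_liouville
    (m q : ℝ) (hm : m ≠ 0) (hq : q ≠ 0)
    (b0 A0 w0 : (Fin 3 → ℝ) → Fin 3 → ℝ)
    (hb0 : ContDiff ℝ 2 b0) (hA0 : ContDiff ℝ 2 A0) (hw0 : ContDiff ℝ 2 w0)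
    (A1 : (Fin 3 → ℝ) × ℝ × ℝ → Fin 3 → ℝ) (hA1 : ContDiff ℝ 2 A1)
    (H : (Fin 3 → ℝ) × ℝ × ℝ × ℝ → ℝ) (hH : ContDiff ℝ 2 H)
    (Astar : (Fin 3 → ℝ) → ℝ → ℝ → ℝ → Fin 3 → ℝ)
    (hAstar : ∀ r u μ t, Astar r u μ t
      = A0 r + (m * u / q) • b0 r - (m * μ / q ^ 2) • w0 r + A1 (r, μ, t))
    (Bstar : (Fin 3 → ℝ) → ℝ → ℝ → ℝ → Fin 3 → ℝ)
    (hBstar : ∀ r u μ t, Bstar r u μ t = curl (fun x => Astar x u μ t) r) :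
    ∀ (r : Fin 3 → ℝ) (u μ t : ℝ),
      deriv (fun t' => b0 r ⬝ᵥ Bstar r u μ t') t
      + divg (fun x =>
          ((1 / m) * deriv (fun u' => H (x, u', μ, t)) u) • Bstar x u μ t
          + (1 / q) • crossProduct (b0 x)
              (grad (fun y => H (y, u, μ, t)) x
                + q • deriv (fun t' => A1 (x, μ, t')) t)) r
      + deriv (fun u' =>
          -(1 / m) * (Bstar r u' μ t ⬝ᵥ
            (grad (fun y => H (y, u', μ, t)) r
              + q • deriv (fun t' => A1 (r, μ, t')) t))) u
      = 0 := by
  intro r u μ t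
  have hA0k : ∀ k : Fin 3, ContDiff ℝ 2 fun x => A0 x k := fun k =>
    (ContinuousLinearMap.proj (R := ℝ) (φ := fun _ : Fin 3 => ℝ) k).contDiff.comp hA0
  have hb0k : ∀ k : Fin 3, ContDiff ℝ 2 fun x => b0 x k := fun k =>
    (ContinuousLinearMap.proj (R := ℝ) (φ := fun _ : Fin 3 => ℝ) k).contDiff.comp hb0
  have hw0k : ∀ k : Fin 3, ContDiff ℝ 2 fun x => w0 x k := fun k =>
    (ContinuousLinearMap.proj (R := ℝ) (φ := fun _ : Fin 3 => ℝ) k).contDiff.comp hw0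
  have hA1k : ∀ k : Fin 3, ContDiff ℝ 2 fun z => A1 z k := fun k =>
    (ContinuousLinearMap.proj (R := ℝ) (φ := fun _ : Fin 3 => ℝ) k).contDiff.comp hA1
  have dA1k : ∀ k : Fin 3, Differentiable ℝ fun z => A1 z k := fun k =>
    (hA1k k).differentiable two_ne_zero
  have dH : Differentiable ℝ H := hH.differentiable two_ne_zero
  have db0 : ∀ k : Fin 3, Differentiable ℝ fun x => b0 x k := fun k =>
    (hb0k k).differentiable two_ne_zero
  have hA1sl : ∀ (t' : ℝ) (j : Fin 3), ContDiff ℝ 2 fun x => A1 (x, μ, t') j :=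
    fun t' j => contDiff_slice3 (hA1k j) μ t'
  have hhu : ∀ x : Fin 3 → ℝ, deriv (fun u' => H (x, u', μ, t)) u
      = fderiv ℝ H (x, u, μ, t) (0, 1, 0, 0) := fun x => deriv_slice_u dH x u μ t
  have hgradH : ∀ (x : Fin 3 → ℝ) (u' : ℝ) (k : Fin 3),
      grad (fun y => H (y, u', μ, t)) x k
        = fderiv ℝ H (x, u', μ, t) (Pi.single k 1, 0, 0, 0) := fun x u' k =>
    pd_slice4 dH u' μ t x k
  have hat : ∀ (x : Fin 3 → ℝ) (k : Fin 3), deriv (fun t' => A1 (x, μ, t')) t k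
      = fderiv ℝ (fun z => A1 z k) (x, μ, t) (0, 0, 1) := by
    intro x k
    have hdiff : DifferentiableAt ℝ (fun t' => A1 (x, μ, t')) t :=
      ((hA1.differentiable two_ne_zero).comp
        ((differentiable_const x).prodMk ((differentiable_const μ).prodMk differentiable_id))) t
    exact (deriv_pi_apply hdiff k).trans (deriv_slice_t (dA1k k) x μ t)
  have hBcomp : ∀ (x : Fin 3 → ℝ) (u' t' : ℝ) (k : Fin 3),
      Bstar x u' μ t' k
        = curl A0 x k + m * u' / q * curl b0 x k - m * μ / q ^ 2 * curl w0 x k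
          + curl (fun y => A1 (y, μ, t')) x k := by
    intro x u' t' k
    have hfun : (fun y => Astar y u' μ t')
        = fun y => A0 y + (m * u' / q) • b0 y - (m * μ / q ^ 2) • w0 y + A1 (y, μ, t') :=
      funext fun y => hAstar y u' μ t'
    rw [hBstar, hfun]
    have dA0' : ∀ kk : Fin 3, DifferentiableAt ℝ (fun y => A0 y kk) x :=
      fun kk => ((hA0k kk).differentiable two_ne_zero) x
    have db0' : ∀ kk : Fin 3, DifferentiableAt ℝ (fun y => b0 y kk) x :=
      fun kk => ((hb0k kk).differentiable two_ne_zero) x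
    have dw0' : ∀ kk : Fin 3, DifferentiableAt ℝ (fun y => w0 y kk) x :=
      fun kk => ((hw0k kk).differentiable two_ne_zero) x
    have da1' : ∀ kk : Fin 3, DifferentiableAt ℝ (fun y => A1 (y, μ, t') kk) x :=
      fun kk => (((hA1sl t' kk)).differentiable two_ne_zero) x
    fin_cases k <;>
      simp only [curl, Fin.reduceFinMk, Matrix.cons_val_zero, Matrix.cons_val_one,
        Matrix.head_cons, Matrix.cons_val_two, Matrix.tail_cons, Pi.add_apply, Pi.sub_apply,
        Pi.smul_apply, smul_eq_mul] <;>
      rw [pd_combo (m * u' / q) (m * μ / q ^ 2) (dA0' _) (db0' _) (dw0' _) (da1' _),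
        pd_combo (m * u' / q) (m * μ / q ^ 2) (dA0' _) (db0' _) (dw0' _) (da1' _)] <;>
      ring
  have hcurlDiff : ∀ F : (Fin 3 → ℝ) → Fin 3 → ℝ, (∀ j, ContDiff ℝ 2 fun x => F x j) →
      ∀ kk : Fin 3, Differentiable ℝ fun x => curl F x kk := by
    intro F hF kk
    fin_cases kk <;>
      simp only [curl, Fin.reduceFinMk, Matrix.cons_val_zero, Matrix.cons_val_one,
        Matrix.head_cons, Matrix.cons_val_two, Matrix.tail_cons] <;>
      exact (diff_pd (hF _) _).sub (diff_pd (hF _) _)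
  have hBdiff : ∀ k : Fin 3, Differentiable ℝ fun x => Bstar x u μ t k := by
    intro k
    have hrw : (fun x => Bstar x u μ t k) = fun x =>
        curl A0 x k + m * u / q * curl b0 x k - m * μ / q ^ 2 * curl w0 x k
          + curl (fun y => A1 (y, μ, t)) x k := funext fun x => hBcomp x u t k
    rw [hrw]
    exact (((hcurlDiff A0 hA0k k).add ((hcurlDiff b0 hb0k k).const_mul _)).sub
        ((hcurlDiff w0 hw0k k).const_mul _)).add (hcurlDiff _ (hA1sl t) k)
  have hBu : ∀ (u' : ℝ) (k : Fin 3),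
      Bstar r u' μ t k = Bstar r u μ t k + (u' - u) * (m / q * curl b0 r k) := by
    intro u' k
    rw [hBcomp r u' t k, hBcomp r u t k]
    ring
  have hA1curl0 : ∀ (x : Fin 3 → ℝ) (t' : ℝ), curl (fun y => A1 (y, μ, t')) x 0
      = fderiv ℝ (fun z => A1 z 2) (x, μ, t') (Pi.single 1 1, 0, 0)
        - fderiv ℝ (fun z => A1 z 1) (x, μ, t') (Pi.single 2 1, 0, 0) := by
    intro x t'
    simp only [curl, Matrix.cons_val_zero, Matrix.cons_val_one, Matrix.head_cons,
      Matrix.cons_val_two, Matrix.tail_cons]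
    rw [pd_slice3 (dA1k 2) μ t' x 1, pd_slice3 (dA1k 1) μ t' x 2]
  have hA1curl1 : ∀ (x : Fin 3 → ℝ) (t' : ℝ), curl (fun y => A1 (y, μ, t')) x 1
      = fderiv ℝ (fun z => A1 z 0) (x, μ, t') (Pi.single 2 1, 0, 0)
        - fderiv ℝ (fun z => A1 z 2) (x, μ, t') (Pi.single 0 1, 0, 0) := by
    intro x t'
    simp only [curl, Matrix.cons_val_zero, Matrix.cons_val_one, Matrix.head_cons,
      Matrix.cons_val_two, Matrix.tail_cons]
    rw [pd_slice3 (dA1k 0) μ t' x 2, pd_slice3 (dA1k 2) μ t' x 0]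
  have hA1curl2 : ∀ (x : Fin 3 → ℝ) (t' : ℝ), curl (fun y => A1 (y, μ, t')) x 2
      = fderiv ℝ (fun z => A1 z 1) (x, μ, t') (Pi.single 0 1, 0, 0)
        - fderiv ℝ (fun z => A1 z 0) (x, μ, t') (Pi.single 1 1, 0, 0) := by
    intro x t'
    simp only [curl, Matrix.cons_val_zero, Matrix.cons_val_one, Matrix.head_cons,
      Matrix.cons_val_two, Matrix.tail_cons]
    rw [pd_slice3 (dA1k 1) μ t' x 0, pd_slice3 (dA1k 0) μ t' x 1]
  have hT1fun : (fun t' => b0 r ⬝ᵥ Bstar r u μ t') = fun t' =>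
      b0 r 0 * (curl A0 r 0 + m * u / q * curl b0 r 0 - m * μ / q ^ 2 * curl w0 r 0
        + (fderiv ℝ (fun z => A1 z 2) (r, μ, t') (Pi.single 1 1, 0, 0)
          - fderiv ℝ (fun z => A1 z 1) (r, μ, t') (Pi.single 2 1, 0, 0)))
      + b0 r 1 * (curl A0 r 1 + m * u / q * curl b0 r 1 - m * μ / q ^ 2 * curl w0 r 1
        + (fderiv ℝ (fun z => A1 z 0) (r, μ, t') (Pi.single 2 1, 0, 0)
          - fderiv ℝ (fun z => A1 z 2) (r, μ, t') (Pi.single 0 1, 0, 0)))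
      + b0 r 2 * (curl A0 r 2 + m * u / q * curl b0 r 2 - m * μ / q ^ 2 * curl w0 r 2
        + (fderiv ℝ (fun z => A1 z 1) (r, μ, t') (Pi.single 0 1, 0, 0)
          - fderiv ℝ (fun z => A1 z 0) (r, μ, t') (Pi.single 1 1, 0, 0))) := by
    funext t'
    simp only [dotProduct, Fin.sum_univ_three]
    rw [hBcomp r u t' 0, hBcomp r u t' 1, hBcomp r u t' 2,
      hA1curl0 r t', hA1curl1 r t', hA1curl2 r t']
  have hT1 : deriv (fun t' => b0 r ⬝ᵥ Bstar r u μ t') t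
      = b0 r 0 * (fderiv ℝ (fun z => fderiv ℝ (fun z' => A1 z' 2) z (0, 0, 1)) (r, μ, t) (Pi.single 1 1, 0, 0) - fderiv ℝ (fun z => fderiv ℝ (fun z' => A1 z' 1) z (0, 0, 1)) (r, μ, t) (Pi.single 2 1, 0, 0))
        + b0 r 1 * (fderiv ℝ (fun z => fderiv ℝ (fun z' => A1 z' 0) z (0, 0, 1)) (r, μ, t) (Pi.single 2 1, 0, 0) - fderiv ℝ (fun z => fderiv ℝ (fun z' => A1 z' 2) z (0, 0, 1)) (r, μ, t) (Pi.single 0 1, 0, 0))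
        + b0 r 2 * (fderiv ℝ (fun z => fderiv ℝ (fun z' => A1 z' 1) z (0, 0, 1)) (r, μ, t) (Pi.single 0 1, 0, 0) - fderiv ℝ (fun z => fderiv ℝ (fun z' => A1 z' 0) z (0, 0, 1)) (r, μ, t) (Pi.single 1 1, 0, 0)) := by
    rw [hT1fun]
    have hD : ∀ (k : Fin 3) (v : (Fin 3 → ℝ) × ℝ × ℝ),
        HasDerivAt (fun t' => fderiv ℝ (fun z => A1 z k) (r, μ, t') v)
          (fderiv ℝ (fun z => fderiv ℝ (fun z' => A1 z' k) z v) (r, μ, t) (0, 0, 1)) t :=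
      fun k v => hasDerivAt_slice_t (diff_fderiv_apply (hA1k k) v) r μ t
    have h0 := ((((hD 2 (Pi.single 1 1, 0, 0)).fun_sub (hD 1 (Pi.single 2 1, 0, 0))).const_add
        (curl A0 r 0 + m * u / q * curl b0 r 0 - m * μ / q ^ 2 * curl w0 r 0)).const_mul (b0 r 0))
    have h1 := ((((hD 0 (Pi.single 2 1, 0, 0)).fun_sub (hD 2 (Pi.single 0 1, 0, 0))).const_add
        (curl A0 r 1 + m * u / q * curl b0 r 1 - m * μ / q ^ 2 * curl w0 r 1)).const_mul (b0 r 1))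
    have h2 := ((((hD 1 (Pi.single 0 1, 0, 0)).fun_sub (hD 0 (Pi.single 1 1, 0, 0))).const_add
        (curl A0 r 2 + m * u / q * curl b0 r 2 - m * μ / q ^ 2 * curl w0 r 2)).const_mul (b0 r 2))
    rw [(((h0.fun_add h1).fun_add h2)).deriv]
    rw [fderiv_fderiv_symm (hA1k 2) (r, μ, t) (Pi.single 1 1, 0, 0) (0, 0, 1),
      fderiv_fderiv_symm (hA1k 1) (r, μ, t) (Pi.single 2 1, 0, 0) (0, 0, 1)]
    rw [fderiv_fderiv_symm (hA1k 0) (r, μ, t) (Pi.single 2 1, 0, 0) (0, 0, 1),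
      fderiv_fderiv_symm (hA1k 2) (r, μ, t) (Pi.single 0 1, 0, 0) (0, 0, 1)]
    rw [fderiv_fderiv_symm (hA1k 1) (r, μ, t) (Pi.single 0 1, 0, 0) (0, 0, 1),
      fderiv_fderiv_symm (hA1k 0) (r, μ, t) (Pi.single 1 1, 0, 0) (0, 0, 1)]
  have hT3fun : (fun u' =>
        -(1 / m) * (Bstar r u' μ t ⬝ᵥ
          (grad (fun y => H (y, u', μ, t)) r
            + q • deriv (fun t' => A1 (r, μ, t')) t)))
      = fun u' => -(1 / m) *
        ((Bstar r u μ t 0 + (u' - u) * (m / q * curl b0 r 0))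
          * (fderiv ℝ H (r, u', μ, t) (Pi.single 0 1, 0, 0, 0) + q * fderiv ℝ (fun z => A1 z 0) (r, μ, t) (0, 0, 1))
        + (Bstar r u μ t 1 + (u' - u) * (m / q * curl b0 r 1))
          * (fderiv ℝ H (r, u', μ, t) (Pi.single 1 1, 0, 0, 0) + q * fderiv ℝ (fun z => A1 z 1) (r, μ, t) (0, 0, 1))
        + (Bstar r u μ t 2 + (u' - u) * (m / q * curl b0 r 2))
          * (fderiv ℝ H (r, u', μ, t) (Pi.single 2 1, 0, 0, 0) + q * fderiv ℝ (fun z => A1 z 2) (r, μ, t) (0, 0, 1))) := by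
    funext u'
    simp only [dotProduct, Fin.sum_univ_three, Pi.add_apply, Pi.smul_apply, smul_eq_mul]
    rw [hBu u' 0, hBu u' 1, hBu u' 2, hgradH r u' 0, hgradH r u' 1, hgradH r u' 2,
      hat r 0, hat r 1, hat r 2]
  have hT3 : deriv (fun u' =>
        -(1 / m) * (Bstar r u' μ t ⬝ᵥ
          (grad (fun y => H (y, u', μ, t)) r
            + q • deriv (fun t' => A1 (r, μ, t')) t))) u
      = -(1 / m) * (m / q * curl b0 r 0 * (fderiv ℝ H (r, u, μ, t) (Pi.single 0 1, 0, 0, 0) + q * fderiv ℝ (fun z => A1 z 0) (r, μ, t) (0, 0, 1)) + Bstar r u μ t 0 * fderiv ℝ (fun z => fderiv ℝ H z (0, 1, 0, 0)) (r, u, μ, t) (Pi.single 0 1, 0, 0, 0) + m / q * curl b0 r 1 * (fderiv ℝ H (r, u, μ, t) (Pi.single 1 1, 0, 0, 0) + q * fderiv ℝ (fun z => A1 z 1) (r, μ, t) (0, 0, 1)) + Bstar r u μ t 1 * fderiv ℝ (fun z => fderiv ℝ H z (0, 1, 0, 0)) (r, u, μ, t) (Pi.single 1 1, 0, 0, 0)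 + m / q * curl b0 r 2 * (fderiv ℝ H (r, u, μ, t) (Pi.single 2 1, 0, 0, 0) + q * fderiv ℝ (fun z => A1 z 2) (r, μ, t) (0, 0, 1)) + Bstar r u μ t 2 * fderiv ℝ (fun z => fderiv ℝ H z (0, 1, 0, 0)) (r, u, μ, t) (Pi.single 2 1, 0, 0, 0)) := by
    rw [hT3fun]
    have hDu : ∀ k : Fin 3, HasDerivAt (fun u' => fderiv ℝ H (r, u', μ, t) (Pi.single k 1, 0, 0, 0))
        (fderiv ℝ (fun z => fderiv ℝ H z (Pi.single k 1, 0, 0, 0)) (r, u, μ, t) (0, 1, 0, 0)) u :=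
      fun k => hasDerivAt_slice_u (diff_fderiv_apply hH _) r u μ t
    have haff : ∀ c B' : ℝ, HasDerivAt (fun u' => B' + (u' - u) * c) c u := by
      intro c B'
      have := (((hasDerivAt_id' u).sub_const u).mul_const c).const_add B'
      simpa using this
    have g0 := (haff (m / q * curl b0 r 0) (Bstar r u μ t 0)).fun_mul ((hDu 0).add_const (q * fderiv ℝ (fun z => A1 z 0) (r, μ, t) (0, 0, 1)))
    have g1 := (haff (m / q * curl b0 r 1) (Bstar r u μ t 1)).fun_mul ((hDu 1).add_const (q * fderiv ℝ (fun z => A1 z 1) (r, μ, t) (0, 0, 1)))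
    have g2 := (haff (m / q * curl b0 r 2) (Bstar r u μ t 2)).fun_mul ((hDu 2).add_const (q * fderiv ℝ (fun z => A1 z 2) (r, μ, t) (0, 0, 1)))
    rw [(((g0.fun_add g1).fun_add g2).const_mul (-(1 / m))).deriv]
    rw [fderiv_fderiv_symm hH (r, u, μ, t) (Pi.single 0 1, 0, 0, 0) (0, 1, 0, 0)]
    rw [fderiv_fderiv_symm hH (r, u, μ, t) (Pi.single 1 1, 0, 0, 0) (0, 1, 0, 0)]
    rw [fderiv_fderiv_symm hH (r, u, μ, t) (Pi.single 2 1, 0, 0, 0) (0, 1, 0, 0)]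
    -- (derivative value assembled)
    ring
  have hhudiff : Differentiable ℝ fun x => fderiv ℝ H (x, u, μ, t) ((0 : Fin 3 → ℝ), (1 : ℝ), (0 : ℝ), (0 : ℝ)) :=
    diff_slice4 (diff_fderiv_apply hH _) u μ t
  have hFgd : ∀ j : Fin 3, Differentiable ℝ fun x => fderiv ℝ H (x, u, μ, t) (Pi.single j 1, 0, 0, 0) :=
    fun j => diff_slice4 (diff_fderiv_apply hH _) u μ t
  have hGad : ∀ j : Fin 3, Differentiable ℝ fun x => fderiv ℝ (fun z => A1 z j) (x, μ, t) ((0 : Fin 3 → ℝ), (0 : ℝ), (1 : ℝ)) :=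
    fun j => diff_slice3 (diff_fderiv_apply (hA1k j) _) μ t
  have hGdiff : ∀ j : Fin 3, Differentiable ℝ fun x =>
      fderiv ℝ H (x, u, μ, t) (Pi.single j 1, 0, 0, 0)
        + q * fderiv ℝ (fun z => A1 z j) (x, μ, t) (0, 0, 1) :=
    fun j => (hFgd j).add ((hGad j).const_mul q)
  have hGdiff' : ∀ j : Fin 3, DifferentiableAt ℝ (fun x =>
      ((fun i => fderiv ℝ H (x, u, μ, t) (Pi.single i 1, 0, 0, 0))
        + q • fun i => fderiv ℝ (fun z => A1 z i) (x, μ, t) (0, 0, 1)) j) r :=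
    fun j => (hGdiff j) r
  have hInteg : (fun x =>
        ((1 / m) * deriv (fun u' => H (x, u', μ, t)) u) • Bstar x u μ t
        + (1 / q) • crossProduct (b0 x)
            (grad (fun y => H (y, u, μ, t)) x
              + q • deriv (fun t' => A1 (x, μ, t')) t))
      = fun x => ((1 / m) * fderiv ℝ H (x, u, μ, t) (0, 1, 0, 0)) • Bstar x u μ t
        + (1 / q) • crossProduct (b0 x)
            ((fun i => fderiv ℝ H (x, u, μ, t) (Pi.single i 1, 0, 0, 0))
              + q • fun i => fderiv ℝ (fun z => A1 z i) (x, μ, t) (0, 0, 1)) := by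
    funext x
    rw [hhu x]
    have e2 : grad (fun y => H (y, u, μ, t)) x + q • deriv (fun t' => A1 (x, μ, t')) t
        = (fun i => fderiv ℝ H (x, u, μ, t) (Pi.single i 1, 0, 0, 0))
          + q • fun i => fderiv ℝ (fun z => A1 z i) (x, μ, t) (0, 0, 1) := by
      funext i
      simp only [Pi.add_apply, Pi.smul_apply, smul_eq_mul]
      rw [hgradH x u i, hat x i]
    rw [e2]
  have hdivB : divg (fun x => Bstar x u μ t) r = 0 := by
    have h1 : (fun x => Bstar x u μ t) = curl fun y => Astar y u μ t :=
      funext fun x => hBstar x u μ t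
    rw [h1]
    refine divg_curl_zero fun j => ?_
    have h2 : (fun x => Astar x u μ t j) = fun x =>
        A0 x j + m * u / q * b0 x j - m * μ / q ^ 2 * w0 x j + A1 (x, μ, t) j := by
      funext x
      rw [hAstar]
      simp [mul_comm]
    rw [h2]
    exact (((hA0k j).add (contDiff_const.mul (hb0k j))).sub
      (contDiff_const.mul (hw0k j))).add (hA1sl t j)
  have hF1d : ∀ j : Fin 3, DifferentiableAt ℝ
      (fun x => (((1 / m) * fderiv ℝ H (x, u, μ, t) (0, 1, 0, 0)) • Bstar x u μ t) j) r :=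
    fun j => (((hhudiff.const_mul (1 / m)).mul (hBdiff j)) r)
  have hF2d : ∀ j : Fin 3, DifferentiableAt ℝ
      (fun x => ((1 / q : ℝ) • crossProduct (b0 x)
        ((fun i => fderiv ℝ H (x, u, μ, t) (Pi.single i 1, 0, 0, 0))
          + q • fun i => fderiv ℝ (fun z => A1 z i) (x, μ, t) (0, 0, 1))) j) r := by
    intro j
    have hd : ∀ i : Fin 3, Differentiable ℝ fun x =>
        ((fun i' => fderiv ℝ H (x, u, μ, t) (Pi.single i' 1, 0, 0, 0))
          + q • fun i' => fderiv ℝ (fun z => A1 z i') (x, μ, t) (0, 0, 1)) i := fun i => hGdiff i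
    fin_cases j <;>
      simp only [cross_apply, Pi.smul_apply, smul_eq_mul, Pi.add_apply, Fin.reduceFinMk,
        Matrix.cons_val_zero, Matrix.cons_val_one, Matrix.head_cons, Matrix.cons_val_two,
        Matrix.tail_cons] <;>
      exact ((((db0 _).mul (hd _)).sub ((db0 _).mul (hd _))).const_mul (1 / q)) r
  have hpdf : ∀ i : Fin 3, pd i (fun x => 1 / m * fderiv ℝ H (x, u, μ, t) (0, 1, 0, 0)) r
      = 1 / m * fderiv ℝ (fun z => fderiv ℝ H z (0, 1, 0, 0)) (r, u, μ, t) (Pi.single i 1, 0, 0, 0) := by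
    intro i
    rw [pd_const_mul (1 / m) (hhudiff r)]
    exact congrArg (HMul.hMul (1 / m)) (pd_slice4 (diff_fderiv_apply hH _) u μ t r i)
  have hcurlFg : ∀ k : Fin 3,
      curl (fun x => fun i => fderiv ℝ H (x, u, μ, t) (Pi.single i 1, 0, 0, 0)) r k = 0 := by
    intro k
    rw [show (fun x => fun i => fderiv ℝ H (x, u, μ, t) (Pi.single i 1, 0, 0, 0))
        = grad fun y => H (y, u, μ, t) from funext fun x => funext fun i => (hgradH x u i).symm]
    exact curl_grad_zero (contDiff_slice4 hH u μ t) k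
  have hGa0 : curl (fun x => fun i => fderiv ℝ (fun z => A1 z i) (x, μ, t) (0, 0, 1)) r 0
      = fderiv ℝ (fun z => fderiv ℝ (fun z' => A1 z' 2) z (0, 0, 1)) (r, μ, t) (Pi.single 1 1, 0, 0)
        - fderiv ℝ (fun z => fderiv ℝ (fun z' => A1 z' 1) z (0, 0, 1)) (r, μ, t) (Pi.single 2 1, 0, 0) := by
    simp only [curl, Matrix.cons_val_zero, Matrix.cons_val_one, Matrix.head_cons,
      Matrix.cons_val_two, Matrix.tail_cons]
    rw [pd_slice3 (diff_fderiv_apply (hA1k 2) _) μ t r 1,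
      pd_slice3 (diff_fderiv_apply (hA1k 1) _) μ t r 2]
  have hGa1 : curl (fun x => fun i => fderiv ℝ (fun z => A1 z i) (x, μ, t) (0, 0, 1)) r 1
      = fderiv ℝ (fun z => fderiv ℝ (fun z' => A1 z' 0) z (0, 0, 1)) (r, μ, t) (Pi.single 2 1, 0, 0)
        - fderiv ℝ (fun z => fderiv ℝ (fun z' => A1 z' 2) z (0, 0, 1)) (r, μ, t) (Pi.single 0 1, 0, 0) := by
    simp only [curl, Matrix.cons_val_zero, Matrix.cons_val_one, Matrix.head_cons,
      Matrix.cons_val_two, Matrix.tail_cons]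
    rw [pd_slice3 (diff_fderiv_apply (hA1k 0) _) μ t r 2,
      pd_slice3 (diff_fderiv_apply (hA1k 2) _) μ t r 0]
  have hGa2 : curl (fun x => fun i => fderiv ℝ (fun z => A1 z i) (x, μ, t) (0, 0, 1)) r 2
      = fderiv ℝ (fun z => fderiv ℝ (fun z' => A1 z' 1) z (0, 0, 1)) (r, μ, t) (Pi.single 0 1, 0, 0)
        - fderiv ℝ (fun z => fderiv ℝ (fun z' => A1 z' 0) z (0, 0, 1)) (r, μ, t) (Pi.single 1 1, 0, 0) := by
    simp only [curl, Matrix.cons_val_zero, Matrix.cons_val_one, Matrix.head_cons,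
      Matrix.cons_val_two, Matrix.tail_cons]
    rw [pd_slice3 (diff_fderiv_apply (hA1k 1) _) μ t r 0,
      pd_slice3 (diff_fderiv_apply (hA1k 0) _) μ t r 1]
  have hcurlG : ∀ k : Fin 3,
      curl (fun x => (fun i => fderiv ℝ H (x, u, μ, t) (Pi.single i 1, 0, 0, 0))
        + q • fun i => fderiv ℝ (fun z => A1 z i) (x, μ, t) (0, 0, 1)) r k
      = curl (fun x => fun i => fderiv ℝ H (x, u, μ, t) (Pi.single i 1, 0, 0, 0)) r k
        + q * curl (fun x => fun i => fderiv ℝ (fun z => A1 z i) (x, μ, t) (0, 0, 1)) r k := by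
    intro k
    exact curl_add_smul q (fun j => (hFgd j) r) (fun j => (hGad j) r) k
  have hT2 : divg (fun x =>
        ((1 / m) * deriv (fun u' => H (x, u', μ, t)) u) • Bstar x u μ t
        + (1 / q) • crossProduct (b0 x)
            (grad (fun y => H (y, u, μ, t)) x
              + q • deriv (fun t' => A1 (x, μ, t')) t)) r
      = (1 / m * fderiv ℝ (fun z => fderiv ℝ H z (0, 1, 0, 0)) (r, u, μ, t) (Pi.single 0 1, 0, 0, 0) * Bstar r u μ t 0 + 1 / m * fderiv ℝ (fun z => fderiv ℝ H z (0, 1, 0, 0)) (r, u, μ, t) (Pi.single 1 1, 0, 0, 0) * Bstar r u μ t 1 + 1 / m * fderiv ℝ (fun z => fderiv ℝ H z (0, 1, 0, 0)) (r, u, μ, t) (Pi.single 2 1, 0, 0, 0) * Bstar r u μ t 2)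
        + 1 / q * (((fderiv ℝ H (r, u, μ, t) (Pi.single 0 1, 0, 0, 0) + q * fderiv ℝ (fun z => A1 z 0) (r, μ, t) (0, 0, 1)) * curl b0 r 0 + (fderiv ℝ H (r, u, μ, t) (Pi.single 1 1, 0, 0, 0) + q * fderiv ℝ (fun z => A1 z 1) (r, μ, t) (0, 0, 1)) * curl b0 r 1 + (fderiv ℝ H (r, u, μ, t) (Pi.single 2 1, 0, 0, 0) + q * fderiv ℝ (fun z => A1 z 2) (r, μ, t) (0, 0, 1)) * curl b0 r 2)
          - (b0 r 0 * (q * (fderiv ℝ (fun z => fderiv ℝ (fun z' => A1 z' 2) z (0, 0, 1)) (r, μ, t) (Pi.single 1 1, 0, 0) - fderiv ℝ (fun z => fderiv ℝ (fun z' => A1 z' 1) z (0, 0, 1)) (r, μ, t) (Pi.single 2 1, 0, 0))) + b0 r 1 * (q * (fderiv ℝ (fun z => fderiv ℝ (fun z' => A1 z' 0) z (0, 0, 1)) (r, μ, t) (Pi.single 2 1, 0, 0) - fderiv ℝ (fun z => fderiv ℝ (fun z' => A1 z' 2) z (0, 0, 1)) (r, μ, t) (Pi.single 0 1, 0, 0)))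 + b0 r 2 * (q * (fderiv ℝ (fun z => fderiv ℝ (fun z' => A1 z' 1) z (0, 0, 1)) (r, μ, t) (Pi.single 0 1, 0, 0) - fderiv ℝ (fun z => fderiv ℝ (fun z' => A1 z' 0) z (0, 0, 1)) (r, μ, t) (Pi.single 1 1, 0, 0))))) := by
    rw [hInteg, divg_add hF1d hF2d,
      divg_smul ((hhudiff.const_mul (1 / m)) r) (fun j => (hBdiff j) r),
      divg_smul_cross (1 / q) (fun j => (db0 j) r) hGdiff',
      hdivB, mul_zero, add_zero]
    simp only [dotProduct, Fin.sum_univ_three, grad, Pi.add_apply, Pi.smul_apply, smul_eq_mul]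
    rw [hpdf 0, hpdf 1, hpdf 2, hcurlG 0, hcurlG 1, hcurlG 2, hcurlFg 0, hcurlFg 1, hcurlFg 2,
      hGa0, hGa1, hGa2]
    ring
  rw [hT1, hT2, hT3]
  field_simp
  ring
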